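/- Extraction of a minimal generating subset: let the grading given by W be positive, fix shifts δ_1,…,δ_r ∈ ℤ^m, and let g_1,…,g_s ∈ P^r be homogeneous vectors, g_k of degree d_k ∈ ℤ^m, with d_1 ≤_Lex d_2 ≤_Lex ⋯ ≤_Lex d_s, and let M = Span_P(g_1,…,g_s). Let T = {k ∈ {1,…,s} : g_k ∉ Span_P(g_1,…,g_{k−1})}. Then {g_k : k ∈ T} is a minimal system of generators of M: Span_P({g_k : k ∈ T}) = M, and for every k ∈ T one has g_k ∉ Span_P({g_j : j ∈ T, j ≠ k}). -/

import Mathlib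

open MvPolynomial

/-- The `W`-degree of an exponent vector `α ∈ ℕ^n`: `W·α = ∑ⱼ αⱼ w⁽ʲ⁾ ∈ ℤ^m`. -/
def wdeg {m n : ℕ} (W : Matrix (Fin m) (Fin n) ℤ) (α : Fin n →₀ ℕ) : Fin m → ℤ :=
  fun i => ∑ j, (α j : ℤ) * W i j

instance (priority := 10000) finWFL' {m : ℕ} :
    IsWellFounded (Fin m)
      (@LT.lt (Fin m) (@Preorder.toLT (Fin m) (@PartialOrder.toPreorder (Fin m)
        (@LinearOrder.toPartialOrder (Fin m) Fin.instLinearOrder)))) :=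
  inferInstanceAs (WellFoundedLT (Fin m))

section Aux
variable {m n : ℕ} (W : Matrix (Fin m) (Fin n) ℤ)

def wcol (W : Matrix (Fin m) (Fin n) ℤ) : Fin n → (Fin m → ℤ) := fun j i => W i j

lemma toLex_sum' {ι : Type*} (s : Finset ι) (f : ι → (Fin m → ℤ)) :
    toLex (∑ j ∈ s, f j) = ∑ j ∈ s, toLex (f j) := by
  induction s using Finset.cons_induction with
  | empty => rfl
  | cons a s ha ih => rw [Finset.sum_cons, Finset.sum_cons, ← ih]; rfl

lemma toLex_nsmul' (c : ℕ) (x : Fin m → ℤ) : toLex (c • x) = c • toLex x := rfl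

lemma wdeg_eq_sum (α : Fin n →₀ ℕ) : wdeg W α = ∑ j, (α j) • wcol W j := by
  funext i
  rw [Finset.sum_apply]
  simp [wdeg, wcol, mul_comm]

lemma weight_wcol (α : Fin n →₀ ℕ) : Finsupp.weight (wcol W) α = wdeg W α := by
  rw [Finsupp.weight_apply, Finsupp.sum_fintype _ _ (by intro j; simp), wdeg_eq_sum]

lemma wdeg_add (α β : Fin n →₀ ℕ) : wdeg W (α + β) = wdeg W α + wdeg W β := by
  simp [wdeg_eq_sum, add_smul, Finset.sum_add_distrib]

lemma toLex_wdeg (α : Fin n →₀ ℕ) :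
    toLex (wdeg W α) = ∑ j, (α j) • toLex (wcol W j) := by
  rw [wdeg_eq_sum, toLex_sum']
  simp only [toLex_nsmul']

variable (hW : ∀ j : Fin n, ∃ i : Fin m, 0 < W i j ∧ ∀ i' < i, W i' j = 0)
include hW

lemma toLex_wcol_pos (j : Fin n) : 0 < toLex (wcol W j) := by
  obtain ⟨i, hi, h0⟩ := hW j
  exact ⟨i, fun i' hi' => (h0 i' hi').symm, hi⟩

lemma toLex_wdeg_nonneg (α : Fin n →₀ ℕ) : 0 ≤ toLex (wdeg W α) := by
  rw [toLex_wdeg]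
  exact Finset.sum_nonneg fun j _ => nsmul_nonneg (le_of_lt (toLex_wcol_pos W hW j)) _

lemma toLex_wdeg_pos (α : Fin n →₀ ℕ) (hα : α ≠ 0) : 0 < toLex (wdeg W α) := by
  rw [toLex_wdeg]
  apply Finset.sum_pos'
  · intro j _
    exact nsmul_nonneg (le_of_lt (toLex_wcol_pos W hW j)) _
  · obtain ⟨j, hj⟩ : ∃ j, α j ≠ 0 := by
      by_contra hc
      push_neg at hc
      exact hα (Finsupp.ext hc)
    exact ⟨j, Finset.mem_univ j, nsmul_pos (toLex_wcol_pos W hW j) hj⟩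

lemma wdeg_eq_zero (α : Fin n →₀ ℕ) (h : wdeg W α = 0) : α = 0 := by
  by_contra hα
  have hlt := toLex_wdeg_pos W hW α hα
  rw [h] at hlt
  exact lt_irrefl _ hlt

end Aux

section Comp
variable {K : Type*} [Field K] {m n : ℕ} (W : Matrix (Fin m) (Fin n) ℤ)

noncomputable def hcomp (e : Fin m → ℤ) (p : MvPolynomial (Fin n) K) : MvPolynomial (Fin n) K :=
  weightedHomogeneousComponent (wcol W) e p

lemma coeff_hcomp (e : Fin m → ℤ) (p : MvPolynomial (Fin n) K) (α : Fin n →₀ ℕ) :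
    coeff α (hcomp W e p) = if wdeg W α = e then coeff α p else 0 := by
  classical
  rw [hcomp, coeff_weightedHomogeneousComponent, weight_wcol]

lemma hcomp_of_homog (e : Fin m → ℤ) (p : MvPolynomial (Fin n) K)
    (hp : ∀ α ∈ p.support, wdeg W α = e) : hcomp W e p = p := by
  ext α
  rw [coeff_hcomp]
  split_ifs with h
  · rfl
  · by_contra hc
    exact h (hp α (mem_support_iff.mpr fun h0 => hc h0.symm))

lemma hcomp_mul_homog (f e : Fin m → ℤ) (c p : MvPolynomial (Fin n) K)
    (hp : ∀ α ∈ p.support, wdeg W α = e) :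
    hcomp W f (c * p) = hcomp W (f - e) c * p := by
  classical
  ext α
  rw [coeff_hcomp, MvPolynomial.coeff_mul, MvPolynomial.coeff_mul]
  split_ifs with h
  · refine Finset.sum_congr rfl ?_
    rintro ⟨β, γ⟩ hbg
    rw [Finset.HasAntidiagonal.mem_antidiagonal] at hbg
    rw [coeff_hcomp]
    by_cases hγ : coeff γ p = 0
    · simp [hγ]
    · have hgd : wdeg W γ = e := hp γ (mem_support_iff.mpr hγ)
      have hbd : wdeg W β = f - e := by
        have hab : wdeg W β + wdeg W γ = wdeg W α := by rw [← wdeg_add, hbg]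
        rw [hgd, h] at hab
        rw [← hab]; abel
      rw [if_pos hbd]
  · symm
    apply Finset.sum_eq_zero
    rintro ⟨β, γ⟩ hbg
    rw [Finset.HasAntidiagonal.mem_antidiagonal] at hbg
    rw [coeff_hcomp]
    by_cases hγ : coeff γ p = 0
    · simp [hγ]
    · have hgd : wdeg W γ = e := hp γ (mem_support_iff.mpr hγ)
      rw [if_neg, zero_mul]
      intro hb
      apply h
      rw [← hbg, wdeg_add, hb, hgd]
      abel


end Comp

section Comp2
variable {K : Type*} [Field K] {m n : ℕ} (W : Matrix (Fin m) (Fin n) ℤ)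
variable (hW : ∀ j : Fin n, ∃ i : Fin m, 0 < W i j ∧ ∀ i' < i, W i' j = 0)
include hW

lemma hcomp_eq_zero_of_neg (e : Fin m → ℤ) (hneg : toLex e < 0) (c : MvPolynomial (Fin n) K) :
    hcomp W e c = 0 := by
  ext α
  rw [coeff_hcomp, coeff_zero]
  split_ifs with h
  · exfalso
    have h1 := toLex_wdeg_nonneg W hW α
    rw [h] at h1
    exact absurd (lt_of_le_of_lt h1 hneg) (lt_irrefl _)
  · rfl

lemma hcomp_zero_eq_C (c : MvPolynomial (Fin n) K) :
    hcomp W 0 c = C (coeff 0 c) := by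
  ext α
  rw [coeff_hcomp, MvPolynomial.coeff_C]
  by_cases h : α = 0
  · subst h
    rw [if_pos rfl, if_pos]
    funext i; simp [wdeg]
  · rw [if_neg (fun h0 : (0:Fin n →₀ ℕ) = α => h h0.symm),
      if_neg (fun hz => h (wdeg_eq_zero W hW α hz))]

end Comp2

/-- A polynomial is `W`-homogeneous of degree `d ∈ ℤ^m` if every monomial in its support
has `W`-degree `d`. -/
def IsWHomogeneous {K : Type*} [CommSemiring K] {m n : ℕ} (W : Matrix (Fin m) (Fin n) ℤ)
    (p : MvPolynomial (Fin n) K) (d : Fin m → ℤ) : Prop :=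
  ∀ α ∈ p.support, wdeg W α = d

/-- The grading given by `W` is positive: the rows of `W` are `ℤ`-linearly independent,
no column of `W` is zero, and the first non-zero entry of each column of `W` is positive. -/
def PositiveGrading {m n : ℕ} (W : Matrix (Fin m) (Fin n) ℤ) : Prop :=
  LinearIndependent ℤ (fun i : Fin m => (fun j => W i j : Fin n → ℤ)) ∧
  (∀ j : Fin n, ∃ i : Fin m, W i j ≠ 0) ∧
  (∀ j : Fin n, ∃ i : Fin m, 0 < W i j ∧ ∀ i' < i, W i' j = 0)

/-- A vector `v ∈ P^r` is homogeneous of degree `d ∈ ℤ^m` (with respect to the shifts `δ`)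
if each component `v i` is `W`-homogeneous of degree `d - δ i`. -/
def IsWHomogeneousVec {K : Type*} [CommSemiring K] {m n r : ℕ} (W : Matrix (Fin m) (Fin n) ℤ)
    (δ : Fin r → Fin m → ℤ) (v : Fin r → MvPolynomial (Fin n) K) (d : Fin m → ℤ) : Prop :=
  ∀ i : Fin r, ∀ α ∈ (v i).support, wdeg W α = d - δ i

/-- Extraction of a minimal generating subset: for homogeneous vectors `g_1,…,g_s ∈ P^r`
with `Lex`-increasing degrees and `T = {k : g_k ∉ Span_P(g_1,…,g_(k−1))}`, the family
`{g_k : k ∈ T}` is a minimal system of generators of `M = Span_P(g_1,…,g_s)`. -/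
theorem stmt_11 {K : Type*} [Field K] {m n r s : ℕ} (W : Matrix (Fin m) (Fin n) ℤ)
    (hW : PositiveGrading W) (δ : Fin r → Fin m → ℤ)
    (g : Fin s → (Fin r → MvPolynomial (Fin n) K)) (d : Fin s → Fin m → ℤ)
    (hgh : ∀ k, IsWHomogeneousVec W δ (g k) (d k))
    (hord : ∀ j k : Fin s, j ≤ k → toLex (d j) ≤ toLex (d k)) :
    Submodule.span (MvPolynomial (Fin n) K)
        (g '' {k | g k ∉ Submodule.span (MvPolynomial (Fin n) K) (g '' {j | j < k})}) =
      Submodule.span (MvPolynomial (Fin n) K) (Set.range g) ∧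
    ∀ k, g k ∉ Submodule.span (MvPolynomial (Fin n) K) (g '' {j | j < k}) →
      g k ∉ Submodule.span (MvPolynomial (Fin n) K)
        (g '' ({j | g j ∉ Submodule.span (MvPolynomial (Fin n) K) (g '' {i | i < j})} \ {k})) := by
  classical
  have hW3 := hW.2.2
  set T : Set (Fin s) :=
    {k | g k ∉ Submodule.span (MvPolynomial (Fin n) K) (g '' {j | j < k})} with hT
  constructor
  · -- span equality
    have H : ∀ N : ℕ, ∀ k : Fin s, (k : ℕ) < N →
        g k ∈ Submodule.span (MvPolynomial (Fin n) K) (g '' T) := by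
      intro N
      induction N with
      | zero => exact fun k hk => absurd hk (Nat.not_lt_zero _)
      | succ N ih =>
        intro k hk
        by_cases hkT : g k ∈ Submodule.span (MvPolynomial (Fin n) K) (g '' {j | j < k})
        · have hle : Submodule.span (MvPolynomial (Fin n) K) (g '' {j | j < k}) ≤
              Submodule.span (MvPolynomial (Fin n) K) (g '' T) := by
            rw [Submodule.span_le]
            rintro x ⟨j, hj, rfl⟩
            have hjN : (j : ℕ) < N :=
              lt_of_lt_of_le (show (j : ℕ) < (k : ℕ) from hj) (Nat.lt_succ_iff.mp hk)
            exact ih j hjN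
          exact hle hkT
        · exact Submodule.subset_span ⟨k, hkT, rfl⟩
    apply le_antisymm
    · exact Submodule.span_mono (Set.image_subset_range g _)
    · rw [Submodule.span_le]
      rintro x ⟨k, rfl⟩
      exact H s k k.isLt
  · -- minimality
    intro k hk hmem
    obtain ⟨l, hl, hsum⟩ := (Finsupp.mem_span_image_iff_linearCombination _).1 hmem
    rw [Finsupp.mem_supported] at hl
    rw [Finsupp.linearCombination_apply, Finsupp.sum] at hsum
    set c' : Fin s → MvPolynomial (Fin n) K := fun j => hcomp W (d k - d j) (l j) with hc'
    have key : ∑ j ∈ l.support, c' j • g j = g k := by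
      funext i
      have hbase : ∑ j ∈ l.support, l j * g j i = g k i := by
        have h0 := congrFun hsum i
        simpa [Finset.sum_apply, smul_eq_mul] using h0
      have h1 : ∀ j, hcomp W (d k - δ i) (l j * g j i) = c' j * g j i := by
        intro j
        rw [hcomp_mul_homog W (d k - δ i) (d j - δ i) (l j) (g j i) (hgh j i),
          sub_sub_sub_cancel_right]
      calc (∑ j ∈ l.support, c' j • g j) i
          = ∑ j ∈ l.support, c' j * g j i := by
            simp [Finset.sum_apply, smul_eq_mul]
        _ = ∑ j ∈ l.support, hcomp W (d k - δ i) (l j * g j i) :=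
            Finset.sum_congr rfl fun j _ => (h1 j).symm
        _ = hcomp W (d k - δ i) (∑ j ∈ l.support, l j * g j i) := by
            simp only [hcomp]
            rw [← map_sum]
        _ = hcomp W (d k - δ i) (g k i) := by rw [hbase]
        _ = g k i := hcomp_of_homog W _ _ (hgh k i)
    have hzero : ∀ j, toLex (d k) < toLex (d j) → c' j = 0 := by
      intro j hj
      apply hcomp_eq_zero_of_neg W hW3
      exact sub_neg.mpr hj
    have hdeq : ∀ j, k < j → c' j ≠ 0 → d j = d k := by
      intro j hkj hc0
      rcases lt_or_eq_of_le (hord k j (le_of_lt hkj)) with hlt | heq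
      · exact absurd (hzero j hlt) hc0
      · exact (toLex.injective heq).symm
    set S := l.support.filter (fun j => k < j ∧ c' j ≠ 0) with hSdef
    by_cases hSne : S.Nonempty
    · -- leading index among the "equal degree, larger index" part
      set j₀ := S.max' hSne with hj₀def
      have hj₀S : j₀ ∈ S := S.max'_mem hSne
      rw [hSdef, Finset.mem_filter] at hj₀S
      obtain ⟨hj₀sup, hkj₀, hc₀⟩ := hj₀S
      have hjT : j₀ ∈ T \ ({k} : Set (Fin s)) := hl hj₀sup
      refine hjT.1 ?_
      have hdj₀ : d j₀ = d k := hdeq j₀ hkj₀ hc₀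
      have heq1 : c' j₀ • g j₀ = g k - ∑ j ∈ l.support.erase j₀, c' j • g j :=
        eq_sub_iff_add_eq.2 ((Finset.add_sum_erase _ (fun j => c' j • g j) hj₀sup).trans key)
      have hCl : c' j₀ = C (coeff 0 (l j₀)) := by
        show hcomp W (d k - d j₀) (l j₀) = _
        rw [hdj₀, sub_self]
        exact hcomp_zero_eq_C W hW3 (l j₀)
      have hlam : coeff 0 (l j₀) ≠ 0 := fun h0 => hc₀ (by rw [hCl, h0, map_zero])
      have hgj₀ : g j₀ = (C (coeff 0 (l j₀))⁻¹ : MvPolynomial (Fin n) K) • (c' j₀ • g j₀) := by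
        rw [hCl, smul_smul, ← C_mul, inv_mul_cancel₀ hlam, C_1, one_smul]
      rw [hgj₀, heq1]
      apply Submodule.smul_mem
      apply Submodule.sub_mem
      · exact Submodule.subset_span ⟨k, hkj₀, rfl⟩
      · apply Submodule.sum_mem
        intro j hj
        have hjsup : j ∈ l.support := Finset.mem_of_mem_erase hj
        have hjne : j ≠ j₀ := Finset.ne_of_mem_erase hj
        by_cases hc0 : c' j = 0
        · rw [hc0, zero_smul]; exact Submodule.zero_mem _
        · have hjlt : j < j₀ := by
            rcases lt_or_gt_of_ne hjne with h | h
            · exact h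
            · exfalso
              have hjS : j ∈ S := Finset.mem_filter.mpr ⟨hjsup, lt_trans hkj₀ h, hc0⟩
              exact absurd (S.le_max' j hjS) (not_le.mpr h)
          exact Submodule.smul_mem _ _ (Submodule.subset_span ⟨j, hjlt, rfl⟩)
    · -- no larger index: contradiction with hk
      apply hk
      rw [← key]
      apply Submodule.sum_mem
      intro j hj
      by_cases hc0 : c' j = 0
      · rw [hc0, zero_smul]; exact Submodule.zero_mem _
      · have hjT : j ∈ T \ ({k} : Set (Fin s)) := hl hj
        have hjk : j ≠ k := fun h => hjT.2 (by rw [h]; exact Set.mem_singleton k)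
        have hjlt : j < k := by
          rcases lt_trichotomy j k with h | h | h
          · exact h
          · exact absurd h hjk
          · exact absurd ⟨j, Finset.mem_filter.mpr ⟨hj, h, hc0⟩⟩ hSne
        exact Submodule.smul_mem _ _ (Submodule.subset_span ⟨j, hjlt, rfl⟩)
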